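/- arXiv:1906.05630 — 5 statements merged into one kernel-verified Lean document; each statement's English description precedes it below -/
import Mathlib

section
/- For every real a with a ≠ lπ for all integers l, and every real b, the series ∑_{k=0}^∞ |cos(a k + b)| / (k+1) diverges. -/
open Real

lemma abs_cos_add_abs_sin_ge_one (x : ℝ) : 1 ≤ |Real.cos x| + |Real.sin x| := by
  have h1 : Real.cos x ^ 2 + Real.sin x ^ 2 = 1 := by
    rw [add_comm]; exact Real.sin_sq_add_cos_sq x
  have hc : Real.cos x ^ 2 ≤ |Real.cos x| := by
    rw [← sq_abs]
    nlinarith [abs_cos_le_one x, abs_nonneg (Real.cos x)]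
  have hs : Real.sin x ^ 2 ≤ |Real.sin x| := by
    rw [← sq_abs]
    nlinarith [abs_sin_le_one x, abs_nonneg (Real.sin x)]
  linarith

lemma key_lower (a x : ℝ) :
    min (1 - |Real.cos a|) |Real.sin a| ≤ |Real.cos x| + |Real.cos (x + a)| := by
  have hexp : Real.cos (x + a) = Real.cos x * Real.cos a - Real.sin x * Real.sin a :=
    Real.cos_add x a
  have h1 : |Real.sin x * Real.sin a| - |Real.cos x * Real.cos a| ≤ |Real.cos (x + a)| := by
    rw [hexp]
    have := abs_sub_abs_le_abs_sub (Real.sin x * Real.sin a) (Real.cos x * Real.cos a)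
    calc |Real.sin x * Real.sin a| - |Real.cos x * Real.cos a|
        ≤ |Real.sin x * Real.sin a - Real.cos x * Real.cos a| := this
      _ = |Real.cos x * Real.cos a - Real.sin x * Real.sin a| := abs_sub_comm _ _
  rw [abs_mul, abs_mul] at h1
  set c := min (1 - |Real.cos a|) |Real.sin a| with hc
  have hc1 : c ≤ 1 - |Real.cos a| := min_le_left _ _
  have hc2 : c ≤ |Real.sin a| := min_le_right _ _
  have hone := abs_cos_add_abs_sin_ge_one x
  have hc0 : 0 ≤ c := le_min (by nlinarith [abs_cos_le_one a]) (abs_nonneg _)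
  nlinarith [mul_nonneg (abs_nonneg (Real.cos x)) (by linarith : (0:ℝ) ≤ 1 - |Real.cos a| - c),
    mul_nonneg (abs_nonneg (Real.sin x)) (by linarith : (0:ℝ) ≤ |Real.sin a| - c),
    mul_nonneg hc0 (by linarith : (0:ℝ) ≤ |Real.cos x| + |Real.sin x| - 1)]

theorem cos_series_divergence (a b : ℝ) (ha : ∀ l : ℤ, a ≠ l * π) :
    ¬ Summable (fun k : ℕ => |Real.cos (a * k + b)| / ((k : ℝ) + 1)) := by
  intro hS
  have hsin : Real.sin a ≠ 0 := by
    rw [ne_eq, Real.sin_eq_zero_iff]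
    push_neg
    intro n hn
    exact ha n hn.symm
  have hcos_lt : |Real.cos a| < 1 := by
    rcases lt_or_eq_of_le (abs_cos_le_one a) with h | h
    · exact h
    · exfalso
      have : Real.cos a ^ 2 = 1 := by rw [← sq_abs, h]; ring
      have h2 : Real.sin a ^ 2 = 0 := by nlinarith [Real.sin_sq_add_cos_sq a]
      exact hsin (pow_eq_zero_iff (n := 2) (by norm_num) |>.mp h2)
  set c := min (1 - |Real.cos a|) |Real.sin a| with hc
  have hcpos : 0 < c := lt_min (by linarith) (abs_pos.mpr hsin)
  set f : ℕ → ℝ := fun k => |Real.cos (a * k + b)| / ((k : ℝ) + 1) with hf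
  have hS1 : Summable (fun k : ℕ => f (k + 1)) := (summable_nat_add_iff 1).2 hS
  have hsum2 : Summable (fun k : ℕ => f k + f (k + 1)) := hS.add hS1
  have hle : ∀ k : ℕ, c / ((k : ℝ) + 2) ≤ f k + f (k + 1) := by
    intro k
    have hk2 : (0 : ℝ) < (k : ℝ) + 2 := by positivity
    have hk1 : (0 : ℝ) < (k : ℝ) + 1 := by positivity
    have key := key_lower a (a * k + b)
    have harg : a * ((k : ℕ) + 1 : ℕ) + b = (a * k + b) + a := by push_cast; ring
    have hfk : |Real.cos (a * k + b)| / ((k : ℝ) + 2) ≤ f k := by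
      apply div_le_div_of_nonneg_left (abs_nonneg _) hk1
      linarith
    have hfk1 : f (k + 1) = |Real.cos ((a * k + b) + a)| / ((k : ℝ) + 2) := by
      simp only [hf, harg]
      push_cast
      ring_nf
    rw [hfk1]
    calc c / ((k : ℝ) + 2)
        ≤ (|Real.cos (a * k + b)| + |Real.cos ((a * k + b) + a)|) / ((k : ℝ) + 2) := by
          exact (div_le_div_iff_of_pos_right hk2).mpr key
      _ = |Real.cos (a * k + b)| / ((k : ℝ) + 2)
            + |Real.cos ((a * k + b) + a)| / ((k : ℝ) + 2) := add_div _ _ _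
      _ ≤ f k + |Real.cos ((a * k + b) + a)| / ((k : ℝ) + 2) := by linarith
  have hsumc : Summable (fun k : ℕ => c / ((k : ℝ) + 2)) := by
    apply Summable.of_nonneg_of_le (fun k => by positivity) hle hsum2
  have hsum1 : Summable (fun k : ℕ => 1 / ((k : ℝ) + 2)) := by
    have := hsumc.mul_left c⁻¹
    convert this using 2 with k
    · rfl
    rw [← mul_div_assoc, inv_mul_cancel₀ hcpos.ne']
  have : Summable (fun k : ℕ => 1 / ((k : ℕ) : ℝ)) := by
    rw [← summable_nat_add_iff 2]
    convert hsum1 using 2 with k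
    · rfl
    push_cast; ring
  exact Real.not_summable_one_div_natCast this
end

section
/- Let d ≥ 1 and ω_1, …, ω_d ≥ 0 be real numbers. Then the series ∑_{n ∈ ℕ^d} (∏_{s=1}^d (n_s+1)^{ω_s}) / (n_1 + … + n_d + 1)^{d + ω_1 + … + ω_d} diverges. -/
theorem multi_series_divergence (d : ℕ) (hd : 1 ≤ d) (ω : Fin d → ℝ) (hω : ∀ s, 0 ≤ ω s) :
    ¬ Summable (fun n : Fin d → ℕ =>
      (∏ s, ((n s : ℝ) + 1) ^ (ω s)) /
        ((∑ s, (n s : ℝ)) + 1) ^ ((d : ℝ) + ∑ s, ω s)) := by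
  intro hs
  set f : (Fin d → ℕ) → ℝ := fun n =>
      (∏ s, ((n s : ℝ) + 1) ^ (ω s)) /
        ((∑ s, (n s : ℝ)) + 1) ^ ((d : ℝ) + ∑ s, ω s) with hf
  have hd1 : (1 : ℝ) ≤ (d : ℝ) := by exact_mod_cast hd
  have hW : 0 ≤ ∑ s, ω s := Finset.sum_nonneg fun s _ => hω s
  set e : ℝ := (d : ℝ) + ∑ s, ω s with he
  have hepos : 0 < e := by rw [he]; linarith
  have hf0 : ∀ n, 0 ≤ f n := by
    intro n
    apply div_nonneg
    · exact Finset.prod_nonneg fun s _ => Real.rpow_nonneg (by positivity) _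
    · exact Real.rpow_nonneg (by positivity) _
  -- blocks
  set B : ℕ → Finset (Fin d → ℕ) :=
    fun k => Fintype.piFinset fun _ : Fin d => Finset.Ico (2 ^ k) (2 ^ (k + 1)) with hB
  set c : ℝ := ((3 * (d : ℝ)) ^ e)⁻¹ with hc
  have hdpos : (0 : ℝ) < 3 * (d : ℝ) := by linarith
  have hcpos : 0 < c := by
    rw [hc]
    exact inv_pos.mpr (Real.rpow_pos_of_pos hdpos _)
  have hblock : ∀ k : ℕ, c ≤ ∑ n ∈ B k, f n := by
    intro k
    have h2k : (0 : ℝ) < (2 : ℝ) ^ k := by positivity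
    have h2k1 : (1 : ℝ) ≤ (2 : ℝ) ^ k := one_le_pow₀ (by norm_num)
    set lb : ℝ := ((2 : ℝ) ^ k) ^ (∑ s, ω s) / (3 * (d : ℝ) * (2 : ℝ) ^ k) ^ e with hlb
    have hmem : ∀ n ∈ B k, lb ≤ f n := by
      intro n hn
      rw [hB, Fintype.mem_piFinset] at hn
      have hlo : ∀ s, (2 : ℝ) ^ k ≤ (n s : ℝ) + 1 := by
        intro s
        have := (Finset.mem_Ico.mp (hn s)).1
        have : ((2 : ℕ) ^ k : ℝ) ≤ (n s : ℝ) := by exact_mod_cast this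
        push_cast at this ⊢
        linarith
      have hhi : ∀ s, (n s : ℝ) + 1 ≤ 2 * (2 : ℝ) ^ k := by
        intro s
        have h0 := (Finset.mem_Ico.mp (hn s)).2
        have h1 : n s + 1 ≤ 2 ^ (k + 1) := h0
        have h' : (n s : ℝ) + 1 ≤ ((2 : ℕ) ^ (k + 1) : ℝ) := by exact_mod_cast h1
        push_cast at h'
        rw [pow_succ] at h'
        linarith
      -- numerator lower bound
      have hnum : ((2 : ℝ) ^ k) ^ (∑ s, ω s) ≤ ∏ s, ((n s : ℝ) + 1) ^ (ω s) := by
        rw [Real.rpow_sum_of_pos h2k]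
        apply Finset.prod_le_prod
        · intro s _; exact Real.rpow_nonneg (le_of_lt h2k) _
        · intro s _
          exact Real.rpow_le_rpow (le_of_lt h2k) (hlo s) (hω s)
      -- denominator upper bound
      have hden : (∑ s, (n s : ℝ)) + 1 ≤ 3 * (d : ℝ) * (2 : ℝ) ^ k := by
        have hsum : ∑ s, (n s : ℝ) ≤ ∑ s : Fin d, (2 * (2 : ℝ) ^ k - 1) := by
          apply Finset.sum_le_sum
          intro s _
          have := hhi s; linarith
        rw [Finset.sum_const, Finset.card_univ, Fintype.card_fin, nsmul_eq_mul] at hsum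
        nlinarith
      have hdenpos : (0 : ℝ) < (∑ s, (n s : ℝ)) + 1 := by positivity
      have hdene : ((∑ s, (n s : ℝ)) + 1) ^ e ≤ (3 * (d : ℝ) * (2 : ℝ) ^ k) ^ e :=
        Real.rpow_le_rpow (le_of_lt hdenpos) hden (le_of_lt hepos)
      have hdenepos : (0 : ℝ) < ((∑ s, (n s : ℝ)) + 1) ^ e :=
        Real.rpow_pos_of_pos hdenpos _
      calc lb ≤ ((2 : ℝ) ^ k) ^ (∑ s, ω s) / ((∑ s, (n s : ℝ)) + 1) ^ e := by
            rw [hlb]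
            exact div_le_div_of_nonneg_left (Real.rpow_nonneg (le_of_lt h2k) _) hdenepos hdene
        _ ≤ f n := by
            rw [hf]
            exact (div_le_div_iff_of_pos_right hdenepos).mpr hnum
    have hcard : (B k).card = (2 ^ k) ^ d := by
      have h21 : 2 ^ (k + 1) - 2 ^ k = 2 ^ k := by
        rw [pow_succ]; omega
      rw [hB, Fintype.card_piFinset]
      simp [Nat.card_Ico, h21]
    have hsum : (B k).card • lb ≤ ∑ n ∈ B k, f n := Finset.card_nsmul_le_sum _ _ _ hmem
    have hval : ((B k).card : ℝ) * lb = c := by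
      rw [hcard, hlb, hc]
      push_cast
      rw [Real.mul_rpow (le_of_lt hdpos) (le_of_lt h2k)]
      rw [he, Real.rpow_add h2k, Real.rpow_natCast]
      have h1 : ((2 : ℝ) ^ k) ^ d ≠ 0 := by positivity
      have h2 : ((2 : ℝ) ^ k) ^ (∑ s, ω s) ≠ 0 :=
        ne_of_gt (Real.rpow_pos_of_pos h2k _)
      have h3 : (3 * (d : ℝ)) ^ e ≠ 0 := ne_of_gt (Real.rpow_pos_of_pos hdpos _)
      field_simp
    rw [nsmul_eq_mul] at hsum
    rw [hval] at hsum
    exact hsum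
  -- disjointness
  have hdisj' : ∀ j k : ℕ, j < k → Disjoint (B j) (B k) := by
    intro j k h
    rw [Finset.disjoint_left]
    intro n hnj hnk
    rw [hB, Fintype.mem_piFinset] at hnj hnk
    have i : Fin d := ⟨0, hd⟩
    have h1 := (Finset.mem_Ico.mp (hnj i)).2
    have h2 := (Finset.mem_Ico.mp (hnk i)).1
    have : (2 : ℕ) ^ (j + 1) ≤ 2 ^ k := Nat.pow_le_pow_right (by norm_num) (by omega)
    omega
  have hdisj : (Set.univ : Set ℕ).PairwiseDisjoint B := by
    intro j _ k _ hjk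
    rcases hjk.lt_or_gt with h | h
    · exact hdisj' _ _ h
    · exact (hdisj' _ _ h).symm
  -- partial sums bounded
  have hK : ∀ K : ℕ, (K : ℝ) * c ≤ ∑' n, f n := by
    intro K
    have h1 : ∑ k ∈ Finset.range K, ∑ n ∈ B k, f n
        = ∑ n ∈ (Finset.range K).biUnion B, f n := by
      rw [Finset.sum_biUnion (fun j _ k _ hjk => hdisj (Set.mem_univ j) (Set.mem_univ k) hjk)]
    have h2 : ∑ n ∈ (Finset.range K).biUnion B, f n ≤ ∑' n, f n :=
      Summable.sum_le_tsum _ (fun n _ => hf0 n) hs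
    have h3 : (K : ℝ) * c ≤ ∑ k ∈ Finset.range K, ∑ n ∈ B k, f n := by
      calc (K : ℝ) * c = ∑ _k ∈ Finset.range K, c := by
            rw [Finset.sum_const, Finset.card_range, nsmul_eq_mul]
        _ ≤ _ := Finset.sum_le_sum fun k _ => hblock k
    linarith
  obtain ⟨K, hKgt⟩ := exists_nat_gt ((∑' n, f n) / c)
  have := hK K
  rw [div_lt_iff₀ hcpos] at hKgt
  linarith
end

section
/- Let d ≥ 2, and let ω_d < 0 be real while ω_1, …, ω_{d-1} are arbitrary reals. If the series ∑_{n' ∈ ℕ^{d-1}} (∏_{s=1}^{d-1}(n_s+1)^{ω_s}) / (n_1+…+n_{d-1}+1)^{(d-1) + ω_1 + … + ω_{d-1}} diverges, then the series ∑_{n ∈ ℕ^d} (∏_{s=1}^{d}(n_s+1)^{ω_s}) / (n_1+…+n_d+1)^{d + ω_1 + … + ω_d} diverges. -/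
theorem aux_sum_out (m : ℕ) (w : Fin m → ℝ) (wl : ℝ) (hwl : wl < 0)
    (hsum : Summable (fun p : (Fin m → ℕ) × ℕ =>
      (∏ s, ((p.1 s : ℝ) + 1) ^ w s) * ((p.2 : ℝ) + 1) ^ wl /
        ((∑ s, (p.1 s : ℝ)) + (p.2 : ℝ) + 1) ^ ((m : ℝ) + 1 + (∑ s, w s) + wl))) :
    Summable (fun n' : Fin m → ℕ =>
      (∏ s, ((n' s : ℝ) + 1) ^ w s) / ((∑ s, (n' s : ℝ)) + 1) ^ ((m : ℝ) + ∑ s, w s)) := by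
  set τ : ℝ := (m : ℝ) + 1 + ∑ s, w s with hτ
  set f : (Fin m → ℕ) × ℕ → ℝ := fun p =>
      (∏ s, ((p.1 s : ℝ) + 1) ^ w s) * ((p.2 : ℝ) + 1) ^ wl /
        ((∑ s, (p.1 s : ℝ)) + (p.2 : ℝ) + 1) ^ (τ + wl) with hf
  have hP : ∀ n' : Fin m → ℕ, 0 < ∏ s, ((n' s : ℝ) + 1) ^ w s := fun n' =>
    Finset.prod_pos fun s _ => Real.rpow_pos_of_pos (by positivity) _
  have hS : ∀ n' : Fin m → ℕ, 0 ≤ ∑ s, (n' s : ℝ) := fun n' =>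
    Finset.sum_nonneg fun s _ => by positivity
  have hfnn : ∀ p, 0 ≤ f p := by
    intro p
    apply div_nonneg _ (Real.rpow_nonneg (by positivity) _)
    exact mul_nonneg (hP p.1).le (Real.rpow_nonneg (by positivity) _)
  rw [summable_prod_of_nonneg hfnn] at hsum
  obtain ⟨hfib, houter⟩ := hsum
  -- per-term lower bound
  have hterm : ∀ (n' : Fin m → ℕ) (k : ℕ),
      (∏ s, ((n' s : ℝ) + 1) ^ w s) * ((∑ s, (n' s : ℝ)) + (k : ℝ) + 1) ^ (-τ) ≤ f (n', k) := by
    intro n' k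
    have hD : (0 : ℝ) < (∑ s, (n' s : ℝ)) + (k : ℝ) + 1 := by
      have := hS n'; positivity
    rw [show (-τ) = wl - (τ + wl) by ring, Real.rpow_sub hD, ← mul_div_assoc]
    simp only [hf]
    gcongr _ * ?_ / _
    exact Real.rpow_le_rpow_of_nonpos (by positivity)
      (by have := hS n'; linarith) hwl.le
  by_cases hτ1 : 1 < τ
  · -- comparison with the tail sum
    have key : ∀ n' : Fin m → ℕ,
        (∏ s, ((n' s : ℝ) + 1) ^ w s) / ((∑ s, (n' s : ℝ)) + 1) ^ ((m : ℝ) + ∑ s, w s) ≤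
        (2 : ℝ) ^ τ * ∑' k, f (n', k) := by
      intro n'
      set N : ℕ := ∑ s, n' s with hN
      have hSN : (∑ s, (n' s : ℝ)) = (N : ℝ) := by rw [hN]; push_cast; ring
      have hK : (0 : ℝ) < (N : ℝ) + 1 := by positivity
      set P : ℝ := ∏ s, ((n' s : ℝ) + 1) ^ w s with hPdef
      have hbound : ((N : ℝ) + 1) * (P * ((2 : ℝ) * ((N : ℝ) + 1)) ^ (-τ)) ≤ ∑' k, f (n', k) := by
        calc ((N : ℝ) + 1) * (P * ((2 : ℝ) * ((N : ℝ) + 1)) ^ (-τ))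
            = ∑ k ∈ Finset.range (N + 1), P * ((2 : ℝ) * ((N : ℝ) + 1)) ^ (-τ) := by
              rw [Finset.sum_const, Finset.card_range, nsmul_eq_mul]; push_cast; ring
          _ ≤ ∑ k ∈ Finset.range (N + 1), f (n', k) := by
              apply Finset.sum_le_sum
              intro k hk
              have hk' : (k : ℝ) ≤ (N : ℝ) := by
                exact_mod_cast Nat.le_of_lt_succ (Finset.mem_range.mp hk)
              calc P * ((2 : ℝ) * ((N : ℝ) + 1)) ^ (-τ)
                  ≤ P * ((∑ s, (n' s : ℝ)) + (k : ℝ) + 1) ^ (-τ) := by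
                    apply mul_le_mul_of_nonneg_left _ (hP n').le
                    apply Real.rpow_le_rpow_of_nonpos (by have := hS n'; positivity) _
                      (by linarith)
                    rw [hSN]; linarith
                _ ≤ f (n', k) := hterm n' k
          _ ≤ ∑' k, f (n', k) := Summable.sum_le_tsum _ (fun k _ => hfnn (n', k)) (hfib n')
      have heq : P / ((∑ s, (n' s : ℝ)) + 1) ^ ((m : ℝ) + ∑ s, w s) =
          (2 : ℝ) ^ τ * (((N : ℝ) + 1) * (P * ((2 : ℝ) * ((N : ℝ) + 1)) ^ (-τ))) := by
        rw [hSN, Real.mul_rpow (by norm_num) hK.le, div_eq_mul_inv, ← Real.rpow_neg hK.le]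
        rw [show -((m : ℝ) + ∑ s, w s) = 1 + (-τ) by rw [hτ]; ring, Real.rpow_add hK,
          Real.rpow_one]
        have h3 : (2 : ℝ) ^ τ * (2 : ℝ) ^ (-τ) = 1 := by
          rw [← Real.rpow_add (by norm_num)]; simp
        linear_combination (-(((N : ℝ) + 1) * P * ((N : ℝ) + 1) ^ (-τ))) * h3
      rw [heq]
      exact mul_le_mul_of_nonneg_left hbound (Real.rpow_nonneg (by norm_num) _)
    apply Summable.of_nonneg_of_le _ key (houter.mul_left ((2 : ℝ) ^ τ))
    intro n'
    apply div_nonneg (hP n').le (Real.rpow_nonneg (by have := hS n'; positivity) _)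
  · -- τ ≤ 1 : contradiction with summability of the fiber at n' = 0
    exfalso
    push_neg at hτ1
    have h0 : Summable (fun k : ℕ => ((k : ℝ) + 1) ^ (-τ)) := by
      apply Summable.of_nonneg_of_le (fun k => Real.rpow_nonneg (by positivity) _) _ (hfib 0)
      intro k
      calc ((k : ℝ) + 1) ^ (-τ)
          = (∏ s : Fin m, (((0 : Fin m → ℕ) s : ℝ) + 1) ^ w s) *
            ((∑ s, ((0 : Fin m → ℕ) s : ℝ)) + (k : ℝ) + 1) ^ (-τ) := by simp
        _ ≤ f (0, k) := hterm 0 k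
    have h1 : Summable (fun k : ℕ => ((k : ℝ) + 1)⁻¹) := by
      apply h0.of_nonneg_of_le (fun k => by positivity)
      intro k
      rw [← Real.rpow_neg_one]
      exact Real.rpow_le_rpow_of_exponent_le (le_add_of_nonneg_left (Nat.cast_nonneg k))
        (by linarith)
    apply Real.not_summable_natCast_inv
    apply (summable_nat_add_iff 1).mp
    convert h1 using 2 with k
    · rfl
    · push_cast
      ring

theorem multi_series_divergence_inductive_step (d : ℕ) (hd : 2 ≤ d) (ω : Fin d → ℝ)
    (hneg : ω ⟨d - 1, Nat.sub_lt (by omega) one_pos⟩ < 0)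
    (hdiv : ¬ Summable (fun n' : Fin (d - 1) → ℕ =>
      (∏ s, ((n' s : ℝ) + 1) ^ (ω (Fin.castLE (Nat.sub_le d 1) s))) /
        ((∑ s, (n' s : ℝ)) + 1) ^ (((d : ℝ) - 1) + ∑ s, ω (Fin.castLE (Nat.sub_le d 1) s)))) :
    ¬ Summable (fun n : Fin d → ℕ =>
      (∏ s, ((n s : ℝ) + 1) ^ (ω s)) /
        ((∑ s, (n s : ℝ)) + 1) ^ ((d : ℝ) + ∑ s, ω s)) := by
  obtain ⟨m, rfl⟩ : ∃ m, d = m + 1 := ⟨d - 1, by omega⟩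
  intro hsum
  apply hdiv
  have hcast : Fin.castLE (Nat.sub_le (m + 1) 1) = (Fin.castSucc : Fin m → Fin (m + 1)) := rfl
  have hneg' : ω (Fin.last m) < 0 := hneg
  rw [hcast]
  have hexp : ((m + 1 : ℕ) : ℝ) - 1 = (m : ℝ) := by push_cast; ring
  simp only [hexp]
  apply aux_sum_out m (fun s => ω (Fin.castSucc s)) (ω (Fin.last m)) hneg'
  have hinj : Function.Injective
      (fun p : (Fin m → ℕ) × ℕ => (Fin.snoc p.1 p.2 : Fin (m + 1) → ℕ)) := by
    rintro ⟨a, b⟩ ⟨c, e⟩ h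
    simp only [Prod.mk.injEq]
    constructor
    · funext s
      have := congrFun h (Fin.castSucc s)
      simpa using this
    · have := congrFun h (Fin.last m)
      simpa using this
  refine (hsum.comp_injective hinj).congr ?_
  rintro ⟨n', k⟩
  simp only [Function.comp_apply, Fin.prod_univ_castSucc, Fin.sum_univ_castSucc,
    Fin.snoc_castSucc, Fin.snoc_last]
  rw [show (((m + 1 : ℕ)) : ℝ) + ((∑ s, ω (Fin.castSucc s)) + ω (Fin.last m)) =
    (m : ℝ) + 1 + (∑ s, ω (Fin.castSucc s)) + ω (Fin.last m) by push_cast; ring]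
end

section
/- For Jacobi parameters α, β > −1, |c_k^{α,β} k^{−1/2} − √2| ≲ k^{−1} uniformly in positive integers k, where c_k^{α,β} = ((2k+α+β+1) Γ(k+α+β+1) Γ(k+1) / (Γ(k+α+1) Γ(k+β+1)))^{1/2}. -/
open Real

private lemma logGamma_step {x : ℝ} (hx : 0 < x) :
    Real.log (Real.Gamma (x + 1)) = Real.log x + Real.log (Real.Gamma x) := by
  rw [Real.Gamma_add_one hx.ne', Real.log_mul hx.ne' (Real.Gamma_pos_of_pos hx).ne']

private lemma slope_upper {x y : ℝ} (hx : 0 < x) (hxy : x < y) :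
    Real.log (Real.Gamma y) - Real.log (Real.Gamma x) ≤ (y - x) * Real.log y := by
  have hy : (0:ℝ) < y := hx.trans hxy
  have h := Real.convexOn_log_Gamma.slope_mono_adjacent (Set.mem_Ioi.mpr hx)
    (Set.mem_Ioi.mpr (by linarith : (0:ℝ) < y + 1)) hxy (by linarith : y < y + 1)
  simp only [Function.comp] at h
  rw [logGamma_step hy] at h
  have h2 : (Real.log (Real.Gamma y) - Real.log (Real.Gamma x)) / (y - x) ≤ Real.log y := by
    simpa using h
  calc Real.log (Real.Gamma y) - Real.log (Real.Gamma x)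
      = (Real.log (Real.Gamma y) - Real.log (Real.Gamma x)) / (y - x) * (y - x) := by
        rw [div_mul_cancel₀ _ (by linarith : y - x ≠ 0)]
    _ ≤ Real.log y * (y - x) := by
        apply mul_le_mul_of_nonneg_right h2 (by linarith)
    _ = (y - x) * Real.log y := mul_comm _ _

private lemma slope_lower {x y : ℝ} (hx : 1 < x) (hxy : x < y) :
    (y - x) * Real.log (x - 1) ≤ Real.log (Real.Gamma y) - Real.log (Real.Gamma x) := by
  have hx1 : (0:ℝ) < x - 1 := by linarith
  have h := Real.convexOn_log_Gamma.slope_mono_adjacent (Set.mem_Ioi.mpr hx1)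
    (Set.mem_Ioi.mpr (by linarith : (0:ℝ) < y)) (by linarith : x - 1 < x) hxy
  simp only [Function.comp] at h
  have hstep : Real.log (Real.Gamma x) - Real.log (Real.Gamma (x - 1)) = Real.log (x - 1) := by
    have := logGamma_step hx1
    rw [sub_add_cancel] at this
    linarith
  rw [show x - (x - 1) = 1 by ring, div_one, hstep] at h
  have := mul_le_mul_of_nonneg_right h (by linarith : (0:ℝ) ≤ y - x)
  rw [div_mul_cancel₀] at this
  · linarith
  · linarith

private lemma log_sub_log_le {a b : ℝ} (hb : 0 < b) (hab : b ≤ a) :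
    Real.log a - Real.log b ≤ (a - b) / b := by
  have ha : 0 < a := lt_of_lt_of_le hb hab
  rw [← Real.log_div ha.ne' hb.ne']
  have := Real.log_le_sub_one_of_pos (div_pos ha hb)
  have : Real.log (a / b) ≤ a / b - 1 := this
  calc Real.log (a / b) ≤ a / b - 1 := this
    _ = (a - b) / b := by field_simp

private lemma abs_log_sub_log {a b : ℝ} (ha : 0 < a) (hb : 0 < b) (c : ℝ)
    (hc : 0 < c) (hca : c ≤ a) (hcb : c ≤ b) :
    |Real.log a - Real.log b| ≤ |a - b| / c := by
  rcases le_total b a with h | h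
  · rw [abs_of_nonneg (by linarith [Real.log_le_log hb h] :
      (0:ℝ) ≤ Real.log a - Real.log b), abs_of_nonneg (by linarith)]
    calc Real.log a - Real.log b ≤ (a - b) / b := log_sub_log_le hb h
      _ ≤ (a - b) / c := by apply div_le_div_of_nonneg_left (by linarith) hc hcb
  · rw [abs_of_nonpos (by linarith [Real.log_le_log ha h] :
      Real.log a - Real.log b ≤ 0), abs_of_nonpos (by linarith), neg_sub, neg_sub]
    calc Real.log b - Real.log a ≤ (b - a) / a := log_sub_log_le ha h
      _ ≤ (b - a) / c := by apply div_le_div_of_nonneg_left (by linarith) hc hca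

/-- Quantitative Wendel-type bound from log-convexity. -/
private lemma wendel (b : ℝ) {x : ℝ} (hx : 2 * (2 + |b|) ≤ x) :
    |Real.log (Real.Gamma (x + b)) - Real.log (Real.Gamma x) - b * Real.log x|
      ≤ 2 * |b| * (1 + |b|) / x := by
  have hbabs : 0 ≤ |b| := abs_nonneg b
  have hx4 : (4:ℝ) ≤ x := by nlinarith
  have hxpos : (0:ℝ) < x := by linarith
  have hb1 : |b| ≤ x / 2 - 2 := by nlinarith
  rcases lt_trichotomy b 0 with hb | hb | hb
  · -- b < 0 : apply slope bounds on [x+b, x]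
    have habs : |b| = -b := abs_of_neg hb
    have hb1' : -b ≤ x / 2 - 2 := by rw [habs] at hb1; exact hb1
    have hxb1 : 1 < x + b := by nlinarith
    have hlt : x + b < x := by linarith
    have hup := slope_upper (by linarith : (0:ℝ) < x + b) hlt
    have hlo := slope_lower hxb1 hlt
    rw [show x - (x + b) = -b by ring] at hup hlo
    -- log Γ(x+b) - log Γ x - b log x  ∈ [0? ...]
    have hlogx : Real.log (x + b - 1) ≤ Real.log x := Real.log_le_log (by linarith) (by linarith)
    have key : |Real.log (Real.Gamma (x + b)) - Real.log (Real.Gamma x) - b * Real.log x|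
        ≤ (-b) * (Real.log x - Real.log (x + b - 1)) := by
      rw [abs_le]
      constructor
      · nlinarith [hup]
      · nlinarith [hlo]
    refine key.trans ?_
    have hlb : Real.log x - Real.log (x + b - 1) ≤ (x - (x + b - 1)) / (x + b - 1) :=
      log_sub_log_le (by linarith) (by linarith)
    have hd : (x - (x + b - 1)) / (x + b - 1) ≤ (1 - b) / (x / 2) := by
      apply div_le_div₀ (by nlinarith) (by linarith) (by linarith) (by nlinarith)
    have : Real.log x - Real.log (x + b - 1) ≤ (1 - b) / (x / 2) := hlb.trans hd
    rw [habs]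
    calc (-b) * (Real.log x - Real.log (x + b - 1)) ≤ (-b) * ((1 - b) / (x / 2)) := by
          apply mul_le_mul_of_nonneg_left this (by linarith)
      _ = 2 * (-b) * (1 + -b) / x := by rw [div_div_eq_mul_div]; ring
  · simp [hb]
  · -- b > 0 : slope bounds on [x, x+b]
    have habs : |b| = b := abs_of_pos hb
    have hlt : x < x + b := by linarith
    have hup := slope_upper (by linarith : (0:ℝ) < x) hlt
    have hlo := slope_lower (by linarith : (1:ℝ) < x) hlt
    rw [show x + b - x = b by ring] at hup hlo
    have key : |Real.log (Real.Gamma (x + b)) - Real.log (Real.Gamma x) - b * Real.log x|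
        ≤ b * (Real.log (x + b) - Real.log (x - 1)) := by
      have h1 : Real.log (x - 1) ≤ Real.log x := Real.log_le_log (by linarith) (by linarith)
      have h2 : Real.log x ≤ Real.log (x + b) := Real.log_le_log (by linarith) (by linarith)
      rw [abs_le]
      constructor
      · nlinarith [hlo]
      · nlinarith [hup]
    refine key.trans ?_
    have hlb : Real.log (x + b) - Real.log (x - 1) ≤ (x + b - (x - 1)) / (x - 1) :=
      log_sub_log_le (by linarith) (by linarith)
    have hd : (x + b - (x - 1)) / (x - 1) ≤ (b + 1) / (x / 2) := by
      apply div_le_div₀ (by nlinarith) (by linarith) (by linarith) (by nlinarith)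
    rw [habs]
    calc b * (Real.log (x + b) - Real.log (x - 1)) ≤ b * ((b + 1) / (x / 2)) := by
          apply mul_le_mul_of_nonneg_left (hlb.trans hd) (by linarith)
      _ = 2 * b * (1 + b) / x := by rw [div_div_eq_mul_div]; ring

private lemma ratio_bound (α β : ℝ) (hα : -1 < α) (hβ : -1 < β) :
    ∃ D > 0, ∀ x : ℝ, 2 * (2 + |β|) ≤ x → D ≤ x →
      |Real.Gamma (x + α + β + 1) * Real.Gamma (x + 1) /
          (Real.Gamma (x + α + 1) * Real.Gamma (x + β + 1)) - 1| ≤ D / x := by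
  set E := 4 * |β| * (1 + |β|) + |α| * |β| with hE
  have hE0 : 0 ≤ E := by positivity
  refine ⟨2 * E + 1, by positivity, fun x h1 h2 => ?_⟩
  have hx4 : (4:ℝ) ≤ x := by
    have : (0:ℝ) ≤ |β| := abs_nonneg β
    linarith
  have hxpos : (0:ℝ) < x := by linarith
  have g1 : 0 < Real.Gamma (x + α + β + 1) := Real.Gamma_pos_of_pos (by linarith)
  have g2 : 0 < Real.Gamma (x + 1) := Real.Gamma_pos_of_pos (by linarith)
  have g3 : 0 < Real.Gamma (x + α + 1) := Real.Gamma_pos_of_pos (by linarith)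
  have g4 : 0 < Real.Gamma (x + β + 1) := Real.Gamma_pos_of_pos (by linarith)
  have hR : 0 < Real.Gamma (x + α + β + 1) * Real.Gamma (x + 1) /
      (Real.Gamma (x + α + 1) * Real.Gamma (x + β + 1)) :=
    div_pos (mul_pos g1 g2) (mul_pos g3 g4)
  have w1 := wendel β (x := x + α + 1) (by linarith)
  have w2 := wendel β (x := x + 1) (by linarith)
  rw [show x + α + 1 + β = x + α + β + 1 by ring] at w1
  rw [show x + 1 + β = x + β + 1 by ring] at w2
  have hll : |Real.log (x + α + 1) - Real.log (x + 1)| ≤ |α| / x := by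
    have := abs_log_sub_log (by linarith : (0:ℝ) < x + α + 1) (by linarith : (0:ℝ) < x + 1)
      x hxpos (by linarith) (by linarith)
    rw [show x + α + 1 - (x + 1) = α by ring] at this
    exact this
  have hb1 : 2 * |β| * (1 + |β|) / (x + α + 1) ≤ 2 * |β| * (1 + |β|) / x :=
    div_le_div_of_nonneg_left (by positivity) hxpos (by linarith)
  have hb2 : 2 * |β| * (1 + |β|) / (x + 1) ≤ 2 * |β| * (1 + |β|) / x :=
    div_le_div_of_nonneg_left (by positivity) hxpos (by linarith)
  have hlogR : Real.log (Real.Gamma (x + α + β + 1) * Real.Gamma (x + 1) /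
      (Real.Gamma (x + α + 1) * Real.Gamma (x + β + 1)))
      = (Real.log (Real.Gamma (x + α + β + 1)) - Real.log (Real.Gamma (x + α + 1))
          - β * Real.log (x + α + 1))
        - (Real.log (Real.Gamma (x + β + 1)) - Real.log (Real.Gamma (x + 1))
          - β * Real.log (x + 1))
        + β * (Real.log (x + α + 1) - Real.log (x + 1)) := by
    rw [Real.log_div (mul_pos g1 g2).ne' (mul_pos g3 g4).ne',
      Real.log_mul g1.ne' g2.ne', Real.log_mul g3.ne' g4.ne']
    ring
  have key : |Real.log (Real.Gamma (x + α + β + 1) * Real.Gamma (x + 1) /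
      (Real.Gamma (x + α + 1) * Real.Gamma (x + β + 1)))| ≤ E / x := by
    rw [hlogR]
    calc |_ - _ + β * (Real.log (x + α + 1) - Real.log (x + 1))|
        ≤ |_ - _| + |β * (Real.log (x + α + 1) - Real.log (x + 1))| := abs_add_le _ _
      _ ≤ (|Real.log (Real.Gamma (x + α + β + 1)) - Real.log (Real.Gamma (x + α + 1))
              - β * Real.log (x + α + 1)|
            + |Real.log (Real.Gamma (x + β + 1)) - Real.log (Real.Gamma (x + 1))
              - β * Real.log (x + 1)|)
            + |β| * |Real.log (x + α + 1) - Real.log (x + 1)| := by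
          rw [abs_mul]
          gcongr
          exact abs_sub _ _
      _ ≤ (2 * |β| * (1 + |β|) / x + 2 * |β| * (1 + |β|) / x) + |β| * (|α| / x) := by
          gcongr
          · exact w1.trans hb1
          · exact w2.trans hb2
      _ = E / x := by rw [hE]; field_simp; ring
  have hEx : E / x ≤ 1 := by
    rw [div_le_one hxpos]; linarith
  calc |Real.Gamma (x + α + β + 1) * Real.Gamma (x + 1) /
        (Real.Gamma (x + α + 1) * Real.Gamma (x + β + 1)) - 1|
      = |Real.exp (Real.log (Real.Gamma (x + α + β + 1) * Real.Gamma (x + 1) /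
          (Real.Gamma (x + α + 1) * Real.Gamma (x + β + 1)))) - 1| := by
        rw [Real.exp_log hR]
    _ ≤ 2 * |Real.log (Real.Gamma (x + α + β + 1) * Real.Gamma (x + 1) /
          (Real.Gamma (x + α + 1) * Real.Gamma (x + β + 1)))| :=
        Real.abs_exp_sub_one_le (key.trans hEx)
    _ ≤ 2 * (E / x) := by linarith
    _ ≤ (2 * E + 1) / x := by
        rw [mul_div_assoc']
        gcongr
        linarith

private lemma main_est (α β : ℝ) (hα : -1 < α) (hβ : -1 < β) (D : ℝ) (hD : 0 < D)
    (hDb : ∀ x : ℝ, 2 * (2 + |β|) ≤ x → D ≤ x →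
      |Real.Gamma (x + α + β + 1) * Real.Gamma (x + 1) /
          (Real.Gamma (x + α + 1) * Real.Gamma (x + β + 1)) - 1| ≤ D / x)
    (x : ℝ) (hx : 2 * (2 + |β|) + 4 * D ≤ x) :
    |Real.sqrt ((2 * x + α + β + 1) * Real.Gamma (x + α + β + 1) * Real.Gamma (x + 1) /
        (Real.Gamma (x + α + 1) * Real.Gamma (x + β + 1))) * (Real.sqrt x)⁻¹ - Real.sqrt 2|
      ≤ (2 * D + 2 * |α + β + 1| + 1) / x := by
  have hβ0 : (0:ℝ) ≤ |β| := abs_nonneg β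
  have hx1 : 2 * (2 + |β|) ≤ x := by linarith
  have hx4 : (4:ℝ) ≤ x := by linarith
  have hxpos : (0:ℝ) < x := by linarith
  have hx2D : 2 * D ≤ x := by linarith
  have hRb := hDb x hx1 (by linarith)
  set R : ℝ := Real.Gamma (x + α + β + 1) * Real.Gamma (x + 1) /
      (Real.Gamma (x + α + 1) * Real.Gamma (x + β + 1)) with hRdef
  have g1 : 0 < Real.Gamma (x + α + β + 1) := Real.Gamma_pos_of_pos (by linarith)
  have g2 : 0 < Real.Gamma (x + 1) := Real.Gamma_pos_of_pos (by linarith)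
  have g3 : 0 < Real.Gamma (x + α + 1) := Real.Gamma_pos_of_pos (by linarith)
  have g4 : 0 < Real.Gamma (x + β + 1) := Real.Gamma_pos_of_pos (by linarith)
  have hRpos : 0 < R := div_pos (mul_pos g1 g2) (mul_pos g3 g4)
  have hDx : D / x ≤ 1 / 2 := by rw [div_le_iff₀ hxpos]; linarith
  have hRle : R ≤ 2 := by
    have := (abs_le.mp hRb).2
    linarith
  set X : ℝ := (2 * x + α + β + 1) * Real.Gamma (x + α + β + 1) * Real.Gamma (x + 1) /
      (Real.Gamma (x + α + 1) * Real.Gamma (x + β + 1)) with hXdef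
  have h2x : (0:ℝ) < 2 * x + α + β + 1 := by linarith
  have hXpos : 0 < X :=
    div_pos (mul_pos (mul_pos h2x g1) g2) (mul_pos g3 g4)
  set g : ℝ := Real.sqrt X * (Real.sqrt x)⁻¹ with hgdef
  have hg2 : g ^ 2 = X / x := by
    rw [hgdef, mul_pow, Real.sq_sqrt hXpos.le, ← Real.sqrt_inv,
      Real.sq_sqrt (inv_nonneg.mpr hxpos.le), div_eq_mul_inv]
  have hXx : X / x = 2 * R + (α + β + 1) * R / x := by
    rw [hXdef, hRdef]
    field_simp
    ring
  have hg2' : g ^ 2 - 2 = 2 * (R - 1) + (α + β + 1) * R / x := by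
    rw [hg2, hXx]; ring
  have habs2 : |g ^ 2 - 2| ≤ (2 * D + 2 * |α + β + 1|) / x := by
    rw [hg2']
    calc |2 * (R - 1) + (α + β + 1) * R / x|
        ≤ |2 * (R - 1)| + |(α + β + 1) * R / x| := abs_add_le _ _
      _ = 2 * |R - 1| + |α + β + 1| * R / x := by
          rw [abs_mul, abs_div, abs_mul, abs_of_nonneg hRpos.le, abs_of_nonneg hxpos.le, abs_two]
      _ ≤ 2 * (D / x) + |α + β + 1| * 2 / x := by
          gcongr
      _ = (2 * D + 2 * |α + β + 1|) / x := by field_simp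
  have hsq2 : Real.sqrt 2 ^ 2 = 2 := Real.sq_sqrt (by norm_num)
  have h1 : (1:ℝ) ≤ Real.sqrt 2 := by nlinarith [Real.sqrt_nonneg 2]
  have hgnn : 0 ≤ g := by positivity
  have hmul : |g - Real.sqrt 2| * (g + Real.sqrt 2) = |g ^ 2 - 2| := by
    rw [← abs_of_nonneg (by positivity : (0:ℝ) ≤ g + Real.sqrt 2), ← abs_mul]
    congr 1
    linear_combination -hsq2
  have hfin : |g - Real.sqrt 2| ≤ |g ^ 2 - 2| := by
    have h2 : |g - Real.sqrt 2| * 1 ≤ |g - Real.sqrt 2| * (g + Real.sqrt 2) :=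
      mul_le_mul_of_nonneg_left (by linarith) (abs_nonneg _)
    rw [hmul, mul_one] at h2
    exact h2
  calc |g - Real.sqrt 2| ≤ |g ^ 2 - 2| := hfin
    _ ≤ (2 * D + 2 * |α + β + 1|) / x := habs2
    _ ≤ (2 * D + 2 * |α + β + 1| + 1) / x := by gcongr ?_ / x; linarith

/-- The normalizing constant `c_k^{α,β}` of the Jacobi trigonometric polynomials. -/
noncomputable def jacobiNormConst (α β : ℝ) (k : ℕ) : ℝ :=
  Real.sqrt
    ((2 * k + α + β + 1) * Real.Gamma (k + α + β + 1) * Real.Gamma (k + 1) /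
      (Real.Gamma (k + α + 1) * Real.Gamma (k + β + 1)))

theorem jacobiNormConst_stirling (α β : ℝ) (hα : -1 < α) (hβ : -1 < β) :
    ∃ C > 0, ∀ k : ℕ, 1 ≤ k →
      |jacobiNormConst α β k * (k : ℝ) ^ (-(1 : ℝ) / 2) - Real.sqrt 2| ≤ C / k := by
  obtain ⟨D, hD, hDb⟩ := ratio_bound α β hα hβ
  set T : ℝ := 2 * (2 + |β|) + 4 * D with hT
  set K : ℕ := ⌈T⌉₊ + 1 with hK
  set C₂ : ℝ := 2 * D + 2 * |α + β + 1| + 1 with hC₂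
  have hKne : (Finset.Icc 1 K).Nonempty := ⟨1, Finset.mem_Icc.mpr ⟨le_refl 1, by omega⟩⟩
  set f : ℕ → ℝ := fun k =>
    (k : ℝ) * |jacobiNormConst α β k * (k : ℝ) ^ (-(1 : ℝ) / 2) - Real.sqrt 2| with hf
  set C₀ : ℝ := (Finset.Icc 1 K).sup' hKne f with hC₀
  refine ⟨max (max C₀ C₂) 1, lt_of_lt_of_le one_pos (le_max_right _ _), fun k hk => ?_⟩
  have hkpos : (0:ℝ) < (k : ℝ) := Nat.cast_pos.mpr hk
  rcases le_or_gt k K with h | h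
  · have hmem : k ∈ Finset.Icc 1 K := Finset.mem_Icc.mpr ⟨hk, h⟩
    have hle := Finset.le_sup' f hmem
    rw [le_div_iff₀ hkpos]
    calc |jacobiNormConst α β k * (k : ℝ) ^ (-(1 : ℝ) / 2) - Real.sqrt 2| * k
        = f k := mul_comm _ _
      _ ≤ C₀ := hle
      _ ≤ max (max C₀ C₂) 1 := le_trans (le_max_left _ _) (le_max_left _ _)
  · have hxT : T ≤ (k : ℝ) := by
      have h1 : ((K : ℕ) : ℝ) ≤ (k : ℝ) := Nat.cast_le.mpr h.le
      have h2 := Nat.le_ceil T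
      rw [hK] at h1
      push_cast at h1
      linarith
    have conv : jacobiNormConst α β k * (k : ℝ) ^ (-(1 : ℝ) / 2)
        = Real.sqrt ((2 * (k:ℝ) + α + β + 1) * Real.Gamma ((k:ℝ) + α + β + 1) *
            Real.Gamma ((k:ℝ) + 1) /
            (Real.Gamma ((k:ℝ) + α + 1) * Real.Gamma ((k:ℝ) + β + 1))) *
            (Real.sqrt (k:ℝ))⁻¹ := by
      rw [jacobiNormConst, neg_div, Real.rpow_neg (Nat.cast_nonneg k), ← Real.sqrt_eq_rpow]
    rw [conv]
    have := main_est α β hα hβ D hD hDb (k : ℝ) (by rw [hT] at hxT; linarith)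
    refine this.trans ?_
    rw [← hC₂]
    gcongr ?_ / (k:ℝ)
    exact le_trans (le_max_right C₀ C₂) (le_max_left _ _)
end

section
/- For α, β ≥ −1/2, the Jacobi trigonometric functions φ_k^{α,β}(θ) = (sin(θ/2))^{α+1/2}(cos(θ/2))^{β+1/2} 𝒫_k^{α,β}(θ) satisfy |φ_k^{α,β}(θ) − φ_k^{α,β}(θ')| ≲ (k+1)^{max(α,β)+1/2} ((k+1)|θ−θ'| + |θ−θ'|^{α+1/2} + |θ−θ'|^{β+1/2}) uniformly in θ, θ' ∈ (0,π) and k ∈ ℕ, assuming the bounds |𝒫_k^{α,β}(θ)| ≲ (k+1)^{max(α,β)+1/2} and |(d/dθ)𝒫_k^{α,β}(θ)| ≲ (k+1)^{max(α,β)+3/2}. -/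
open Real

/-- Lipschitz bound for sine. -/
lemma sin_diff_le (x y : ℝ) : |Real.sin x - Real.sin y| ≤ |x - y| := by
  rw [Real.sin_sub_sin]
  calc |2 * Real.sin ((x - y) / 2) * Real.cos ((x + y) / 2)|
      = 2 * |Real.sin ((x - y) / 2)| * |Real.cos ((x + y) / 2)| := by
        rw [abs_mul, abs_mul]; norm_num
    _ ≤ 2 * |(x - y) / 2| * 1 := by
        apply mul_le_mul (by nlinarith [Real.abs_sin_le_abs (x := (x - y) / 2)])
          (Real.abs_cos_le_one _) (abs_nonneg _) (by positivity)
    _ = |x - y| := by rw [abs_div, abs_two]; ring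

/-- Lipschitz bound for cosine. -/
lemma cos_diff_le (x y : ℝ) : |Real.cos x - Real.cos y| ≤ |x - y| := by
  rw [Real.cos_sub_cos]
  calc |-2 * Real.sin ((x + y) / 2) * Real.sin ((x - y) / 2)|
      = 2 * |Real.sin ((x - y) / 2)| * |Real.sin ((x + y) / 2)| := by
        rw [abs_mul, abs_mul, abs_neg, abs_two]; ring
    _ ≤ 2 * |(x - y) / 2| * 1 := by
        apply mul_le_mul (by nlinarith [Real.abs_sin_le_abs (x := (x - y) / 2)])
          (Real.abs_sin_le_one _) (abs_nonneg _) (by positivity)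
    _ = |x - y| := by rw [abs_div, abs_two]; ring

/-- subadditivity of rpow for exponents in [0,1], real version -/
lemma real_rpow_add_le {x y p : ℝ} (hx : 0 ≤ x) (hy : 0 ≤ y) (hp : 0 ≤ p) (hp1 : p ≤ 1) :
    (x + y) ^ p ≤ x ^ p + y ^ p := by
  have h := NNReal.rpow_add_le_add_rpow x.toNNReal y.toNNReal hp hp1
  have h2 := NNReal.coe_le_coe.2 h
  push_cast [NNReal.coe_rpow] at h2
  rwa [Real.coe_toNNReal x hx, Real.coe_toNNReal y hy] at h2

/-- difference of powers, small exponent -/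
lemma rpow_diff_le_of_le_one {u v p : ℝ} (hv : 0 ≤ v) (hvu : v ≤ u)
    (hp : 0 ≤ p) (hp1 : p ≤ 1) : u ^ p - v ^ p ≤ (u - v) ^ p := by
  have h := real_rpow_add_le hv (sub_nonneg.2 hvu) hp hp1
  rw [add_sub_cancel] at h
  linarith

/-- difference of powers, large exponent, on [0,1] -/
lemma rpow_diff_le_of_one_le {u v p : ℝ} (hu0 : 0 ≤ u) (hu1 : u ≤ 1)
    (hv0 : 0 ≤ v) (hv1 : v ≤ 1) (hp : 1 ≤ p) : |u ^ p - v ^ p| ≤ p * |u - v| := by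
  have hmvt := Convex.norm_image_sub_le_of_norm_hasDerivWithin_le
    (f := fun x : ℝ => x ^ p) (f' := fun x : ℝ => p * x ^ (p - 1)) (s := Set.Icc (0:ℝ) 1)
    (C := p)
    (fun x _ => (Real.hasDerivAt_rpow_const (Or.inr hp)).hasDerivWithinAt)
    (fun x hx => by
      rw [Real.norm_eq_abs, abs_mul, abs_of_nonneg (by linarith : (0:ℝ) ≤ p),
        abs_of_nonneg (Real.rpow_nonneg hx.1 _)]
      nlinarith [Real.rpow_le_one hx.1 hx.2 (by linarith : (0:ℝ) ≤ p - 1)])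
    (convex_Icc 0 1) ⟨hv0, hv1⟩ ⟨hu0, hu1⟩
  simpa [Real.norm_eq_abs, abs_sub_comm] using hmvt

/-- difference of powers, combined estimate -/
lemma rpow_diff_key {u v p t : ℝ} (hu0 : 0 ≤ u) (hu1 : u ≤ 1)
    (hv0 : 0 ≤ v) (hv1 : v ≤ 1) (hp : 0 ≤ p) (ht : 0 ≤ t) (htd : |u - v| ≤ t) :
    |u ^ p - v ^ p| ≤ (p + 1) * (t + t ^ p) := by
  have htp : 0 ≤ t ^ p := Real.rpow_nonneg ht p
  rcases le_or_gt p 1 with hp1 | hp1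
  · -- use |u^p - v^p| ≤ |u-v|^p ≤ t^p
    have key : |u ^ p - v ^ p| ≤ t ^ p := by
      rcases le_total v u with hvu | huv
      · have h1 := rpow_diff_le_of_le_one hv0 hvu hp hp1
        have h2 : (u - v) ^ p ≤ t ^ p := Real.rpow_le_rpow (by linarith)
          (by rw [abs_of_nonneg (by linarith)] at htd; linarith) hp
        have h3 : v ^ p ≤ u ^ p := Real.rpow_le_rpow hv0 hvu hp
        rw [abs_of_nonneg (by linarith)]; linarith
      · have h1 := rpow_diff_le_of_le_one hu0 huv hp hp1
        have h2 : (v - u) ^ p ≤ t ^ p := Real.rpow_le_rpow (by linarith)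
          (by rw [abs_sub_comm, abs_of_nonneg (by linarith)] at htd; linarith) hp
        have h3 : u ^ p ≤ v ^ p := Real.rpow_le_rpow hu0 huv hp
        rw [abs_of_nonpos (by linarith)]; linarith
    nlinarith
  · have key := rpow_diff_le_of_one_le hu0 hu1 hv0 hv1 hp1.le
    nlinarith [abs_nonneg (u - v)]

set_option maxHeartbeats 1000000 in
theorem jacobi_fun_diff_estimate (α β : ℝ) (hα : -(1 : ℝ) / 2 ≤ α) (hβ : -(1 : ℝ) / 2 ≤ β)
    (P P' : ℕ → ℝ → ℝ) (C : ℝ) (hC : 0 < C)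
    (hderiv : ∀ k : ℕ, ∀ θ ∈ Set.Ioo (0 : ℝ) π, HasDerivAt (P k) (P' k θ) θ)
    (hPbound : ∀ k : ℕ, ∀ θ ∈ Set.Ioo (0 : ℝ) π,
      |P k θ| ≤ C * ((k : ℝ) + 1) ^ (max α β + 1 / 2))
    (hP'bound : ∀ k : ℕ, ∀ θ ∈ Set.Ioo (0 : ℝ) π,
      |P' k θ| ≤ C * ((k : ℝ) + 1) ^ (max α β + 3 / 2)) :
    ∃ C' > 0, ∀ k : ℕ, ∀ θ ∈ Set.Ioo (0 : ℝ) π, ∀ θ' ∈ Set.Ioo (0 : ℝ) π,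
      |Real.sin (θ / 2) ^ (α + 1 / 2) * Real.cos (θ / 2) ^ (β + 1 / 2) * P k θ -
        Real.sin (θ' / 2) ^ (α + 1 / 2) * Real.cos (θ' / 2) ^ (β + 1 / 2) * P k θ'| ≤
      C' * ((k : ℝ) + 1) ^ (max α β + 1 / 2) *
        (((k : ℝ) + 1) * |θ - θ'| + |θ - θ'| ^ (α + 1 / 2) + |θ - θ'| ^ (β + 1 / 2)) := by
  set a : ℝ := α + 1 / 2 with ha_def
  set b : ℝ := β + 1 / 2 with hb_def
  have ha : 0 ≤ a := by rw [ha_def]; linarith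
  have hb : 0 ≤ b := by rw [hb_def]; linarith
  have hm : 0 ≤ max α β + 1 / 2 := by
    have : α ≤ max α β := le_max_left _ _; linarith
  refine ⟨C * (a + b + 3), by positivity, ?_⟩
  intro k θ hθ θ' hθ'
  have hk1 : (1 : ℝ) ≤ (k : ℝ) + 1 := by
    have := Nat.cast_nonneg (α := ℝ) k; linarith
  set K : ℝ := ((k : ℝ) + 1) ^ (max α β + 1 / 2) with hK_def
  have hK0 : 0 < K := Real.rpow_pos_of_pos (by positivity) _
  have hK1 : 1 ≤ K := Real.one_le_rpow hk1 hm
  set D : ℝ := |θ - θ'| with hD_def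
  have hD0 : 0 ≤ D := abs_nonneg _
  -- sin/cos bounds for points in (0, π)
  have hsc : ∀ x ∈ Set.Ioo (0 : ℝ) π, 0 ≤ Real.sin (x / 2) ∧ Real.sin (x / 2) ≤ 1 ∧
      0 ≤ Real.cos (x / 2) ∧ Real.cos (x / 2) ≤ 1 := by
    intro x hx
    have h1 : 0 ≤ x / 2 := by linarith [hx.1]
    have h2 : x / 2 ≤ π := by nlinarith [hx.2, Real.pi_pos]
    exact ⟨Real.sin_nonneg_of_nonneg_of_le_pi h1 h2, Real.sin_le_one _,
      Real.cos_nonneg_of_mem_Icc ⟨by linarith [Real.pi_pos], by linarith [hx.2]⟩,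
      Real.cos_le_one _⟩
  obtain ⟨hs0, hs1, hc0, hc1⟩ := hsc θ hθ
  obtain ⟨hs0', hs1', hc0', hc1'⟩ := hsc θ' hθ'
  set s := Real.sin (θ / 2)
  set s' := Real.sin (θ' / 2)
  set c := Real.cos (θ / 2)
  set c' := Real.cos (θ' / 2)
  -- sin/cos differences
  have hhalf : |θ / 2 - θ' / 2| ≤ D := by
    have h1 : |θ / 2 - θ' / 2| = |θ - θ'| / 2 := by
      rw [show θ / 2 - θ' / 2 = (θ - θ') / 2 by ring, abs_div]; norm_num
    rw [h1, hD_def]; linarith [abs_nonneg (θ - θ')]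
  have hsd : |s - s'| ≤ D := (sin_diff_le _ _).trans hhalf
  have hcd : |c - c'| ≤ D := (cos_diff_le _ _).trans hhalf
  -- powers in [0,1]
  have hsa : 0 ≤ s ^ a ∧ s ^ a ≤ 1 := ⟨Real.rpow_nonneg hs0 _, Real.rpow_le_one hs0 hs1 ha⟩
  have hcb : 0 ≤ c ^ b ∧ c ^ b ≤ 1 := ⟨Real.rpow_nonneg hc0 _, Real.rpow_le_one hc0 hc1 hb⟩
  have hsa' : 0 ≤ s' ^ a ∧ s' ^ a ≤ 1 := ⟨Real.rpow_nonneg hs0' _, Real.rpow_le_one hs0' hs1' ha⟩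
  have hcb' : 0 ≤ c' ^ b ∧ c' ^ b ≤ 1 := ⟨Real.rpow_nonneg hc0' _, Real.rpow_le_one hc0' hc1' hb⟩
  -- difference of P via mean value theorem
  have hPdiff : |P k θ - P k θ'| ≤ C * K * (((k : ℝ) + 1) * D) := by
    have hmvt := Convex.norm_image_sub_le_of_norm_hasDerivWithin_le
      (f := P k) (f' := P' k) (s := Set.Ioo (0 : ℝ) π)
      (C := C * ((k : ℝ) + 1) ^ (max α β + 3 / 2))
      (fun x hx => (hderiv k x hx).hasDerivWithinAt)
      (fun x hx => by simpa [Real.norm_eq_abs] using hP'bound k x hx)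
      (convex_Ioo 0 π) hθ' hθ
    have hexp : ((k : ℝ) + 1) ^ (max α β + 3 / 2) = K * ((k : ℝ) + 1) := by
      rw [hK_def, show max α β + 3 / 2 = max α β + 1 / 2 + 1 by ring,
        Real.rpow_add_one (by positivity : ((k : ℝ) + 1) ≠ 0)]
    rw [Real.norm_eq_abs, Real.norm_eq_abs] at hmvt
    calc |P k θ - P k θ'| ≤ C * ((k : ℝ) + 1) ^ (max α β + 3 / 2) * |θ - θ'| := hmvt
      _ = C * K * (((k : ℝ) + 1) * D) := by rw [hexp, hD_def]; ring
  -- power differences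
  have hsad : |s ^ a - s' ^ a| ≤ (a + 1) * (D + D ^ a) :=
    rpow_diff_key hs0 hs1 hs0' hs1' ha hD0 hsd
  have hcbd : |c ^ b - c' ^ b| ≤ (b + 1) * (D + D ^ b) :=
    rpow_diff_key hc0 hc1 hc0' hc1' hb hD0 hcd
  -- P bound at θ'
  have hP' : |P k θ'| ≤ C * K := hPbound k θ' hθ'
  -- splitting
  have hsplit : s ^ a * c ^ b * P k θ - s' ^ a * c' ^ b * P k θ' =
      s ^ a * c ^ b * (P k θ - P k θ') + (s ^ a - s' ^ a) * c ^ b * P k θ' +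
        s' ^ a * (c ^ b - c' ^ b) * P k θ' := by ring
  rw [hsplit]
  have habs : |s ^ a * c ^ b * (P k θ - P k θ') + (s ^ a - s' ^ a) * c ^ b * P k θ' +
      s' ^ a * (c ^ b - c' ^ b) * P k θ'| ≤
      |P k θ - P k θ'| + |s ^ a - s' ^ a| * |P k θ'| + |c ^ b - c' ^ b| * |P k θ'| := by
    have t1 : |s ^ a * c ^ b * (P k θ - P k θ')| ≤ |P k θ - P k θ'| := by
      rw [abs_mul, abs_mul, abs_of_nonneg hsa.1, abs_of_nonneg hcb.1]
      exact mul_le_of_le_one_left (abs_nonneg _) (mul_le_one₀ hsa.2 hcb.1 hcb.2)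
    have t2 : |(s ^ a - s' ^ a) * c ^ b * P k θ'| ≤ |s ^ a - s' ^ a| * |P k θ'| := by
      rw [abs_mul, abs_mul, abs_of_nonneg hcb.1]
      exact mul_le_mul_of_nonneg_right (mul_le_of_le_one_right (abs_nonneg _) hcb.2)
        (abs_nonneg _)
    have t3 : |s' ^ a * (c ^ b - c' ^ b) * P k θ'| ≤ |c ^ b - c' ^ b| * |P k θ'| := by
      rw [abs_mul, abs_mul, abs_of_nonneg hsa'.1]
      exact mul_le_mul_of_nonneg_right (mul_le_of_le_one_left (abs_nonneg _) hsa'.2)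
        (abs_nonneg _)
    have habs2 := abs_add_le (s ^ a * c ^ b * (P k θ - P k θ'))
      ((s ^ a - s' ^ a) * c ^ b * P k θ')
    have habs1 := abs_add_le (s ^ a * c ^ b * (P k θ - P k θ') +
      (s ^ a - s' ^ a) * c ^ b * P k θ') (s' ^ a * (c ^ b - c' ^ b) * P k θ')
    linarith
  refine habs.trans ?_
  have hDa : 0 ≤ D ^ a := Real.rpow_nonneg hD0 _
  have hDb : 0 ≤ D ^ b := Real.rpow_nonneg hD0 _
  have hkD : D ≤ ((k : ℝ) + 1) * D := by nlinarith [hD0, hk1]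
  have e2 : |s ^ a - s' ^ a| * |P k θ'| ≤ (a + 1) * (D + D ^ a) * (C * K) :=
    mul_le_mul hsad hP' (abs_nonneg _) (mul_nonneg (by linarith) (by linarith))
  have e3 : |c ^ b - c' ^ b| * |P k θ'| ≤ (b + 1) * (D + D ^ b) * (C * K) :=
    mul_le_mul hcbd hP' (abs_nonneg _) (mul_nonneg (by linarith) (by linarith))
  have hCK : 0 < C * K := mul_pos hC hK0
  have hLR : ((k : ℝ) + 1) * D + (a + 1) * (D + D ^ a) + (b + 1) * (D + D ^ b) ≤
      (a + b + 3) * (((k : ℝ) + 1) * D + D ^ a + D ^ b) := by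
    nlinarith [mul_nonneg (by linarith : (0:ℝ) ≤ a + b + 2)
      (by linarith : (0:ℝ) ≤ ((k : ℝ) + 1) * D - D), mul_nonneg hb hDa, mul_nonneg ha hDb]
  calc |P k θ - P k θ'| + |s ^ a - s' ^ a| * |P k θ'| + |c ^ b - c' ^ b| * |P k θ'|
      ≤ C * K * (((k : ℝ) + 1) * D) + (a + 1) * (D + D ^ a) * (C * K) +
        (b + 1) * (D + D ^ b) * (C * K) := by linarith
    _ = (C * K) * (((k : ℝ) + 1) * D + (a + 1) * (D + D ^ a) + (b + 1) * (D + D ^ b)) := by ring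
    _ ≤ (C * K) * ((a + b + 3) * (((k : ℝ) + 1) * D + D ^ a + D ^ b)) :=
        mul_le_mul_of_nonneg_left hLR hCK.le
    _ = C * (a + b + 3) * K * (((k : ℝ) + 1) * D + D ^ a + D ^ b) := by ring
end
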